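/- arXiv:1705.05927 — 2 statements merged into one kernel-verified Lean document; each statement's English description precedes it below -/
import Mathlib

section
/- Let M be a symmetric positive-definite real n×n matrix with decomposition M = CᵀC, C invertible. Let f : ℝⁿ → ℝⁿ be continuously differentiable, and let x₀, y₀ ∈ ℝⁿ. Then there exists ω ∈ [0,1] such that, setting ξ = ω·x₀ + (1−ω)·y₀, one has ‖f(x₀) − f(y₀)‖_M ≤ sqrt(λ_max((Cᵀ)⁻¹·Df(ξ)ᵀ·M·Df(ξ)·C⁻¹)) · ‖x₀ − y₀‖_M. -/
open Matrix

/-- Largest eigenvalue of a real matrix, as the supremum of its real spectrum. -/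
noncomputable def lambdaMax {n : ℕ} (S : Matrix (Fin n) (Fin n) ℝ) : ℝ :=
  sSup (spectrum ℝ S)

/-- Weighted `M`-norm of a vector: `‖y‖_M = sqrt (yᵀ M y)`. -/
noncomputable def Mnorm {n : ℕ} (M : Matrix (Fin n) (Fin n) ℝ) (y : Fin n → ℝ) : ℝ :=
  Real.sqrt (y ⬝ᵥ (M *ᵥ y))

/-- Closed ball of radius `δ` about `x` in the `M`-norm. -/
def Mball {n : ℕ} (M : Matrix (Fin n) (Fin n) ℝ) (x : Fin n → ℝ) (δ : ℝ) :
    Set (Fin n → ℝ) :=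
  {y | Mnorm M (y - x) ≤ δ}

/-- Jacobian matrix of `f : ℝⁿ → ℝⁿ` at `x`. -/
noncomputable def jacobian {n : ℕ} (f : (Fin n → ℝ) → (Fin n → ℝ)) (x : Fin n → ℝ) :
    Matrix (Fin n) (Fin n) ℝ :=
  LinearMap.toMatrix' (fderiv ℝ f x).toLinearMap

/-- Cauchy–Schwarz for the real dot product. -/
lemma dot_cs {n : ℕ} (x y : Fin n → ℝ) :
    x ⬝ᵥ y ≤ Real.sqrt (x ⬝ᵥ x) * Real.sqrt (y ⬝ᵥ y) := by
  have := Real.sum_mul_le_sqrt_mul_sqrt Finset.univ x y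
  simpa [dotProduct, pow_two] using this

lemma dot_mulVec_self {n : ℕ} (A : Matrix (Fin n) (Fin n) ℝ) (w : Fin n → ℝ) :
    (A *ᵥ w) ⬝ᵥ (A *ᵥ w) = w ⬝ᵥ ((Aᵀ * A) *ᵥ w) := by
  rw [← Matrix.mulVec_mulVec, Matrix.dotProduct_mulVec w, Matrix.vecMul_transpose]

lemma dot_self_nonneg {n : ℕ} (x : Fin n → ℝ) : 0 ≤ x ⬝ᵥ x :=
  Finset.sum_nonneg fun i _ => mul_self_nonneg (x i)

/-- Rayleigh-type bound: quadratic form bounded by the largest element of the spectrum. -/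
lemma quad_le_lambdaMax {n : ℕ} (S : Matrix (Fin n) (Fin n) ℝ) (hS : S.IsHermitian)
    (w : Fin n → ℝ) :
    w ⬝ᵥ (S *ᵥ w) ≤ sSup (spectrum ℝ S) * (w ⬝ᵥ w) := by
  classical
  set V : Matrix (Fin n) (Fin n) ℝ := (hS.eigenvectorUnitary : Matrix (Fin n) (Fin n) ℝ)
    with hVdef
  have hsV : star (V : Matrix (Fin n) (Fin n) ℝ) = Vᵀ := by
    rw [Matrix.star_eq_conjTranspose, Matrix.conjTranspose_eq_transpose_of_trivial]
  have hVVt : (V : Matrix (Fin n) (Fin n) ℝ) * Vᵀ = 1 := by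
    rw [← hsV]; exact Unitary.mul_star_self_of_mem hS.eigenvectorUnitary.2
  set c : Fin n → ℝ := Vᵀ *ᵥ w with hc
  have h1 : w ⬝ᵥ (S *ᵥ w) = ∑ i, hS.eigenvalues i * (c i * c i) := by
    conv_lhs => rw [hS.spectral_theorem, Unitary.conjStarAlgAut_apply, ← hVdef, hsV]
    rw [← Matrix.mulVec_mulVec, ← Matrix.mulVec_mulVec, Matrix.dotProduct_mulVec,
      ← Matrix.mulVec_transpose, ← hc]
    simp only [dotProduct, Matrix.mulVec_diagonal, Function.comp_apply,
      RCLike.ofReal_real_eq_id, id_eq]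
    exact Finset.sum_congr rfl fun i _ => by ring
  have h2 : w ⬝ᵥ w = ∑ i, c i * c i := by
    have : c ⬝ᵥ c = w ⬝ᵥ w := by
      rw [hc]
      nth_rewrite 1 [Matrix.mulVec_transpose]
      rw [← Matrix.dotProduct_mulVec, Matrix.mulVec_mulVec, hVVt, Matrix.one_mulVec]
    rw [← this]; rfl
  have hbdd : BddAbove (spectrum ℝ S) := (Matrix.finite_real_spectrum (A := S)).bddAbove
  have hmem : ∀ i, hS.eigenvalues i ≤ sSup (spectrum ℝ S) := fun i =>
    le_csSup hbdd (hS.eigenvalues_mem_spectrum_real i)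
  calc w ⬝ᵥ (S *ᵥ w) = ∑ i, hS.eigenvalues i * (c i * c i) := h1
    _ ≤ ∑ i, sSup (spectrum ℝ S) * (c i * c i) :=
        Finset.sum_le_sum fun i _ =>
          mul_le_mul_of_nonneg_right (hmem i) (mul_self_nonneg _)
    _ = sSup (spectrum ℝ S) * (w ⬝ᵥ w) := by rw [h2, Finset.mul_sum]

/-- discrepancy bound in a weighted `M`-norm. -/
theorem discrepancy_Mnorm {n : ℕ} (M C : Matrix (Fin n) (Fin n) ℝ)
    (hM : M.PosDef) (hC : IsUnit C.det) (hCM : Cᵀ * C = M)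
    (f : (Fin n → ℝ) → (Fin n → ℝ)) (hf : ContDiff ℝ 1 f) (x₀ y₀ : Fin n → ℝ) :
    ∃ ω ∈ Set.Icc (0 : ℝ) 1,
      Mnorm M (f x₀ - f y₀) ≤
        Real.sqrt (lambdaMax
            ((Cᵀ)⁻¹ * (jacobian f (ω • x₀ + (1 - ω) • y₀))ᵀ * M *
              jacobian f (ω • x₀ + (1 - ω) • y₀) * C⁻¹)) *
          Mnorm M (x₀ - y₀) := by
  classical
  -- basic data
  set d : Fin n → ℝ := f x₀ - f y₀ with hd
  set v : Fin n → ℝ := x₀ - y₀ with hv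
  set u : Fin n → ℝ := C *ᵥ d with hu
  set a : Fin n → ℝ := u ᵥ* C with ha
  set γ : ℝ → (Fin n → ℝ) := fun t => t • x₀ + (1 - t) • y₀ with hγ
  -- M-quadratic form equals euclidean square of C-image
  have hMq : ∀ z : Fin n → ℝ, z ⬝ᵥ (M *ᵥ z) = (C *ᵥ z) ⬝ᵥ (C *ᵥ z) := by
    intro z
    rw [← hCM, ← Matrix.mulVec_mulVec, Matrix.dotProduct_mulVec, Matrix.vecMul_transpose]
  -- derivative of the scalar path
  have hγ' : ∀ t : ℝ, HasDerivAt γ v t := by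
    intro t
    have h1 : HasDerivAt (fun t : ℝ => t • x₀) ((1 : ℝ) • x₀) t :=
      (hasDerivAt_id t).smul_const x₀
    have h2 : HasDerivAt (fun t : ℝ => (1 - t) • y₀) ((-1 : ℝ) • y₀) t := by
      have : HasDerivAt (fun t : ℝ => 1 - t) (-1) t := (hasDerivAt_id t).const_sub 1
      exact this.smul_const y₀
    have := h1.add h2
    convert this using 1
    · rfl
    · rfl
    · rfl
    · rfl
    rw [hv]
    ext i
    simp [sub_eq_add_neg]
  have hφ : ∀ t : ℝ, HasDerivAt (fun t => a ⬝ᵥ f (γ t))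
      (a ⬝ᵥ ((fderiv ℝ f (γ t)) v)) t := by
    intro t
    have hF : HasFDerivAt f (fderiv ℝ f (γ t)) (γ t) :=
      (hf.differentiable one_ne_zero (γ t)).hasFDerivAt
    have hcomp : HasDerivAt (fun t => f (γ t)) ((fderiv ℝ f (γ t)) v) t :=
      hF.comp_hasDerivAt t (hγ' t)
    have hpi := hasDerivAt_pi.1 hcomp
    have : HasDerivAt (fun t => ∑ i, a i * f (γ t) i)
        (∑ i, a i * ((fderiv ℝ f (γ t)) v) i) t :=
      HasDerivAt.fun_sum fun i _ => (hpi i).const_mul (a i)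
    simpa [dotProduct] using this
  -- Mean value theorem on [0,1]
  obtain ⟨ω, hω, hslope⟩ := exists_hasDerivAt_eq_slope (fun t => a ⬝ᵥ f (γ t))
    (fun t => a ⬝ᵥ ((fderiv ℝ f (γ t)) v)) (by norm_num : (0:ℝ) < 1)
    (fun t _ => (hφ t).continuousAt.continuousWithinAt) (fun t _ => hφ t)
  refine ⟨ω, Set.mem_Icc_of_Ioo hω, ?_⟩
  set ξ : Fin n → ℝ := ω • x₀ + (1 - ω) • y₀ with hξ
  set J : Matrix (Fin n) (Fin n) ℝ := jacobian f ξ with hJ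
  -- identify γ ω with ξ, endpoints
  have hγω : γ ω = ξ := rfl
  have hγ1 : γ 1 = x₀ := by ext i; simp [hγ]
  have hγ0 : γ 0 = y₀ := by ext i; simp [hγ]
  -- Jacobian applied
  have hJv : J *ᵥ v = (fderiv ℝ f ξ) v := by
    rw [hJ, jacobian]
    have := Matrix.toLin'_toMatrix' (R := ℝ) (fderiv ℝ f ξ).toLinearMap
    calc (LinearMap.toMatrix' (fderiv ℝ f ξ).toLinearMap) *ᵥ v
        = Matrix.toLin' (LinearMap.toMatrix' (fderiv ℝ f ξ).toLinearMap) v := rfl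
      _ = (fderiv ℝ f ξ).toLinearMap v := by rw [this]
  -- the MVT identity : u ⬝ᵥ u = u ⬝ᵥ (C *ᵥ (J *ᵥ v))
  have hkey : u ⬝ᵥ u = u ⬝ᵥ (C *ᵥ (J *ᵥ v)) := by
    have hL : a ⬝ᵥ f (γ 1) - a ⬝ᵥ f (γ 0) = u ⬝ᵥ u := by
      rw [hγ1, hγ0, ha, ← Matrix.dotProduct_mulVec, ← Matrix.dotProduct_mulVec,
        ← dotProduct_sub, hu, ← Matrix.mulVec_sub, ← hd]
    have := hslope
    simp only [div_one, sub_zero] at this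
    rw [hL] at this
    rw [← this, hγω, hJv, ha, Matrix.dotProduct_mulVec u C]
  -- invertibility facts
  have hCinv : C⁻¹ * C = 1 := Matrix.nonsing_inv_mul C hC
  set A : Matrix (Fin n) (Fin n) ℝ := C * J * C⁻¹ with hA
  set w : Fin n → ℝ := C *ᵥ v with hw
  have hAw : A *ᵥ w = C *ᵥ (J *ᵥ v) := by
    rw [hA, hw, Matrix.mulVec_mulVec, Matrix.mulVec_mulVec, mul_assoc (C*J),
      hCinv, mul_one]
  -- the spectral matrix equals Aᵀ * A
  have hSid : (Cᵀ)⁻¹ * Jᵀ * M * J * C⁻¹ = Aᵀ * A := by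
    rw [hA, ← hCM]
    rw [Matrix.transpose_mul, Matrix.transpose_mul, Matrix.transpose_nonsing_inv]
    noncomm_ring
  set lam : ℝ := lambdaMax ((Cᵀ)⁻¹ * Jᵀ * M * J * C⁻¹) with hlam
  -- bound ‖A w‖² ≤ lam ‖w‖²
  have hherm : (Aᵀ * A).IsHermitian := by
    have := Matrix.isHermitian_conjTranspose_mul_self A
    rwa [Matrix.conjTranspose_eq_transpose_of_trivial] at this
  have hAwbound : (A *ᵥ w) ⬝ᵥ (A *ᵥ w) ≤ lam * (w ⬝ᵥ w) := by
    rw [dot_mulVec_self, hlam, lambdaMax, hSid]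
    exact quad_le_lambdaMax _ hherm w
  -- Cauchy–Schwarz chain
  have hchain : u ⬝ᵥ u ≤ Real.sqrt (u ⬝ᵥ u) * (Real.sqrt lam * Real.sqrt (w ⬝ᵥ w)) := by
    calc u ⬝ᵥ u = u ⬝ᵥ (A *ᵥ w) := by rw [hAw, ← hkey]
      _ ≤ Real.sqrt (u ⬝ᵥ u) * Real.sqrt ((A *ᵥ w) ⬝ᵥ (A *ᵥ w)) := dot_cs _ _
      _ ≤ Real.sqrt (u ⬝ᵥ u) * (Real.sqrt lam * Real.sqrt (w ⬝ᵥ w)) := by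
          apply mul_le_mul_of_nonneg_left _ (Real.sqrt_nonneg _)
          rw [← Real.sqrt_mul' _ (dot_self_nonneg w)]
          exact Real.sqrt_le_sqrt hAwbound
  -- conclude
  have hMd : Mnorm M d = Real.sqrt (u ⬝ᵥ u) := by rw [Mnorm, hMq, hu]
  have hMv : Mnorm M v = Real.sqrt (w ⬝ᵥ w) := by rw [Mnorm, hMq, hw]
  have hgoal : Real.sqrt (u ⬝ᵥ u) ≤ Real.sqrt lam * Real.sqrt (w ⬝ᵥ w) := by
    rcases eq_or_lt_of_le (dot_self_nonneg u) with h0 | hpos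
    · rw [← h0, Real.sqrt_zero]
      positivity
    · have hs : 0 < Real.sqrt (u ⬝ᵥ u) := Real.sqrt_pos.2 hpos
      have : Real.sqrt (u ⬝ᵥ u) * Real.sqrt (u ⬝ᵥ u) ≤
          Real.sqrt (u ⬝ᵥ u) * (Real.sqrt lam * Real.sqrt (w ⬝ᵥ w)) := by
        rwa [Real.mul_self_sqrt (dot_self_nonneg u)]
      exact le_of_mul_le_mul_left this hs
  calc Mnorm M (f x₀ - f y₀) = Real.sqrt (u ⬝ᵥ u) := by rw [← hd, hMd]
    _ ≤ Real.sqrt lam * Real.sqrt (w ⬝ᵥ w) := hgoal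
    _ = Real.sqrt lam * Mnorm M (x₀ - y₀) := by rw [← hMv, hv]
end

section
/- Let M₀, M₁ be symmetric positive-definite real n×n matrices with decompositions M₀ = C₀ᵀC₀ and M₁ = C₁ᵀC₁ (C₀, C₁ invertible). Let t₀ ≤ t₁, and for each t ∈ [t₀,t₁] let f_t : ℝⁿ → ℝⁿ be continuously differentiable (representing the time-t solution map of the ODE x′ = F(t,x) started at time t₀). Let x₀ ∈ ℝⁿ, δ₀ > 0, X = B_{M₀}(x₀, δ₀). Suppose {D_t}_{t∈[t₀,t₁]} is a family of subsets of ℝ^{n×n} with Df_t(x) ∈ D_t for all x ∈ X and all t ∈ [t₀,t₁], and Λ > 0 satisfies Λ ≥ sqrt(λ_max((C₀ᵀ)⁻¹·Dᵀ·M₁·D·C₀⁻¹)) for every D that belongs to D_t for some t ∈ [t₀,t₁]. Then for all t ∈ [t₀,t₁] and all x ∈ X, f_t(x) ∈ B_{M₁}(f_t(x₀), Λ·δ₀). -/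
open Matrix

lemma mulVec_dotProduct_eq {n : ℕ} (B : Matrix (Fin n) (Fin n) ℝ) (x y : Fin n → ℝ) :
    (B *ᵥ x) ⬝ᵥ y = x ⬝ᵥ (Bᵀ *ᵥ y) := by
  rw [dotProduct_comm, dotProduct_mulVec, ← mulVec_transpose, dotProduct_comm]

lemma rayleigh_bound {n : ℕ} {S : Matrix (Fin n) (Fin n) ℝ} (hS : S.IsHermitian)
    (v : Fin n → ℝ) : v ⬝ᵥ (S *ᵥ v) ≤ lambdaMax S * (v ⬝ᵥ v) := by
  classical
  set U : Matrix (Fin n) (Fin n) ℝ := (hS.eigenvectorUnitary : Matrix (Fin n) (Fin n) ℝ) with hUdef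
  set w : Fin n → ℝ := Uᵀ *ᵥ v with hw
  have hst : (RCLike.ofReal ∘ hS.eigenvalues : Fin n → ℝ) = hS.eigenvalues := by
    ext i; simp
  have hstarU : star U = Uᵀ := by
    rw [star_eq_conjTranspose, conjTranspose]
    ext i j; simp
  have hUU : U * Uᵀ = 1 := by
    rw [← hstarU]; exact (Matrix.mem_unitaryGroup_iff).mp hS.eigenvectorUnitary.2
  have h1 : v ⬝ᵥ (S *ᵥ v) = w ⬝ᵥ (diagonal hS.eigenvalues *ᵥ w) := by
    conv_lhs => rw [hS.spectral_theorem, Unitary.conjStarAlgAut_apply, hst, hstarU]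
    rw [← mulVec_mulVec, ← mulVec_mulVec, dotProduct_mulVec, ← mulVec_transpose, hw]
  have h2 : v ⬝ᵥ v = w ⬝ᵥ w := by
    rw [hw, dotProduct_mulVec, vecMul_transpose, mulVec_mulVec, hUU, one_mulVec]
  rw [h1, h2]
  have hbdd : BddAbove (spectrum ℝ S) := (Matrix.finite_real_spectrum (A := S)).bddAbove
  have heig : ∀ i, hS.eigenvalues i ≤ lambdaMax S := fun i =>
    le_csSup hbdd (hS.eigenvalues_mem_spectrum_real i)
  calc w ⬝ᵥ (diagonal hS.eigenvalues *ᵥ w)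
      = ∑ i, hS.eigenvalues i * (w i * w i) := by
        simp only [dotProduct, mulVec_diagonal]; congr 1; ext i; ring
    _ ≤ ∑ i, lambdaMax S * (w i * w i) := by
        refine Finset.sum_le_sum fun i _ => ?_
        exact mul_le_mul_of_nonneg_right (heig i) (mul_self_nonneg _)
    _ = lambdaMax S * (w ⬝ᵥ w) := by rw [dotProduct, Finset.mul_sum]


lemma key_bound {n : ℕ} {M₁ C₀ : Matrix (Fin n) (Fin n) ℝ} (hM₁ : M₁ᵀ = M₁)
    (A : Matrix (Fin n) (Fin n) ℝ) {Λ : ℝ} (hΛpos : 0 ≤ Λ)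
    (h : Real.sqrt (lambdaMax ((C₀ᵀ)⁻¹ * Aᵀ * M₁ * A * C₀⁻¹)) ≤ Λ) (u : Fin n → ℝ) :
    (A *ᵥ (C₀⁻¹ *ᵥ u)) ⬝ᵥ (M₁ *ᵥ (A *ᵥ (C₀⁻¹ *ᵥ u))) ≤ Λ ^ 2 * (u ⬝ᵥ u) := by
  classical
  set S : Matrix (Fin n) (Fin n) ℝ := (C₀ᵀ)⁻¹ * Aᵀ * M₁ * A * C₀⁻¹ with hSdef
  have htr : (C₀ᵀ)⁻¹ = (C₀⁻¹)ᵀ := (Matrix.transpose_nonsing_inv C₀).symm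
  have hS : S.IsHermitian := by
    rw [Matrix.IsHermitian, conjTranspose_eq_transpose_of_trivial, hSdef, htr]
    simp [Matrix.transpose_mul, Matrix.transpose_transpose, hM₁, Matrix.mul_assoc,
      Matrix.transpose_nonsing_inv]
  have hdot : (A *ᵥ (C₀⁻¹ *ᵥ u)) ⬝ᵥ (M₁ *ᵥ (A *ᵥ (C₀⁻¹ *ᵥ u))) = u ⬝ᵥ (S *ᵥ u) := by
    rw [mulVec_dotProduct_eq, mulVec_dotProduct_eq, mulVec_mulVec, mulVec_mulVec,
      mulVec_mulVec, mulVec_mulVec, hSdef, htr]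
  have hlam : lambdaMax S ≤ Λ ^ 2 := by
    rcases le_or_gt 0 (lambdaMax S) with hl | hl
    · calc lambdaMax S = Real.sqrt (lambdaMax S) ^ 2 := (Real.sq_sqrt hl).symm
        _ ≤ Λ ^ 2 := pow_le_pow_left₀ (Real.sqrt_nonneg _) h 2
    · nlinarith
  have huu : (0:ℝ) ≤ u ⬝ᵥ u := by
    rw [dotProduct]
    exact Finset.sum_nonneg fun i _ => mul_self_nonneg _
  calc (A *ᵥ (C₀⁻¹ *ᵥ u)) ⬝ᵥ (M₁ *ᵥ (A *ᵥ (C₀⁻¹ *ᵥ u))) = u ⬝ᵥ (S *ᵥ u) := hdot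
    _ ≤ lambdaMax S * (u ⬝ᵥ u) := rayleigh_bound hS u
    _ ≤ Λ ^ 2 * (u ⬝ᵥ u) := mul_le_mul_of_nonneg_right hlam huu


lemma norm_equiv_symm {n : ℕ} (y : Fin n → ℝ) :
    ‖(EuclideanSpace.equiv (Fin n) ℝ).symm y‖ = Real.sqrt (y ⬝ᵥ y) := by
  rw [EuclideanSpace.norm_eq]
  congr 1
  simp [dotProduct, sq]

lemma jacobian_mulVec {n : ℕ} (f : (Fin n → ℝ) → (Fin n → ℝ)) (x v : Fin n → ℝ) :
    jacobian f x *ᵥ v = fderiv ℝ f x v := by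
  rw [jacobian, ← Matrix.toLin'_apply, Matrix.toLin'_toMatrix']
  rfl

/-- continuous-time ball propagation (Theorem `thmmaincont`).
`f t` is the time-`t` solution map; if the Jacobians over the initial ball lie
in `D t` for every `t ∈ [t₀,t₁]` and `Λ` bounds the stretching factor of every
member of every `D t`, then at every intermediate time the reach set is
contained in the `M₁`-ball of radius `Λ·δ₀`. -/
theorem ball_propagation_cont {n : ℕ} (M₀ M₁ C₀ C₁ : Matrix (Fin n) (Fin n) ℝ)
    (hM₀ : M₀.PosDef) (hM₁ : M₁.PosDef)
    (hC₀ : IsUnit C₀.det) (hC₁ : IsUnit C₁.det)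
    (hCM₀ : C₀ᵀ * C₀ = M₀) (hCM₁ : C₁ᵀ * C₁ = M₁)
    (t₀ t₁ : ℝ) (ht : t₀ ≤ t₁)
    (f : ℝ → (Fin n → ℝ) → (Fin n → ℝ))
    (hf : ∀ t ∈ Set.Icc t₀ t₁, ContDiff ℝ 1 (f t))
    (x₀ : Fin n → ℝ) (δ₀ : ℝ) (hδ₀ : 0 < δ₀)
    (D : ℝ → Set (Matrix (Fin n) (Fin n) ℝ))
    (hD : ∀ t ∈ Set.Icc t₀ t₁, ∀ x ∈ Mball M₀ x₀ δ₀, jacobian (f t) x ∈ D t)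
    (Λ : ℝ) (hΛpos : 0 < Λ)
    (hΛ : ∀ t ∈ Set.Icc t₀ t₁, ∀ A ∈ D t,
      Real.sqrt (lambdaMax ((C₀ᵀ)⁻¹ * Aᵀ * M₁ * A * C₀⁻¹)) ≤ Λ) :
    ∀ t ∈ Set.Icc t₀ t₁, ∀ x ∈ Mball M₀ x₀ δ₀,
      f t x ∈ Mball M₁ (f t x₀) (Λ * δ₀) := by
  intro t hT x hx
  have hft := hf t hT
  have hM₁sym : M₁ᵀ = M₁ := by rw [← hCM₁]; simp [Matrix.transpose_mul, Matrix.mul_assoc]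
  set eqE := EuclideanSpace.equiv (Fin n) ℝ with heqE
  set ℓ₀ : EuclideanSpace ℝ (Fin n) →L[ℝ] (Fin n → ℝ) :=
    ((Matrix.mulVecLin C₀⁻¹).toContinuousLinearMap).comp
      (eqE : EuclideanSpace ℝ (Fin n) →L[ℝ] (Fin n → ℝ)) with hℓ₀
  set ℓ₁ : (Fin n → ℝ) →L[ℝ] EuclideanSpace ℝ (Fin n) :=
    ((eqE.symm : (Fin n → ℝ) →L[ℝ] EuclideanSpace ℝ (Fin n))).comp
      (Matrix.mulVecLin C₁).toContinuousLinearMap with hℓ₁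
  set g : EuclideanSpace ℝ (Fin n) → EuclideanSpace ℝ (Fin n) := fun w => ℓ₁ (f t (ℓ₀ w)) with hg
  have hℓ₀app : ∀ u, ℓ₀ u = C₀⁻¹ *ᵥ (eqE u) := fun u => rfl
  have hℓ₁app : ∀ z, ℓ₁ z = eqE.symm (C₁ *ᵥ z) := fun z => rfl
  set w₀ : EuclideanSpace ℝ (Fin n) := eqE.symm (C₀ *ᵥ x₀) with hw₀
  set w : EuclideanSpace ℝ (Fin n) := eqE.symm (C₀ *ᵥ x) with hw
  set s := Metric.closedBall w₀ δ₀ with hs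
  -- Mnorm via C
  have hMnorm₀ : ∀ y, Mnorm M₀ y = Real.sqrt ((C₀ *ᵥ y) ⬝ᵥ (C₀ *ᵥ y)) := by
    intro y; rw [Mnorm, mulVec_dotProduct_eq, mulVec_mulVec, hCM₀]
  have hMnorm₁ : ∀ y, Mnorm M₁ y = Real.sqrt ((C₁ *ᵥ y) ⬝ᵥ (C₁ *ᵥ y)) := by
    intro y; rw [Mnorm, mulVec_dotProduct_eq, mulVec_mulVec, hCM₁]
  have hinv : C₀⁻¹ * C₀ = 1 := Matrix.nonsing_inv_mul C₀ hC₀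
  have hsub : ∀ u ∈ s, ℓ₀ u ∈ Mball M₀ x₀ δ₀ := by
    intro u hu
    have h1 : C₀ *ᵥ (ℓ₀ u - x₀) = eqE u - C₀ *ᵥ x₀ := by
      rw [Matrix.mulVec_sub, hℓ₀app, Matrix.mulVec_mulVec, Matrix.mul_nonsing_inv C₀ hC₀,
        Matrix.one_mulVec]
    have h2 : u - w₀ = eqE.symm (eqE u - C₀ *ᵥ x₀) := by
      rw [map_sub, hw₀]; congr 1
    have h3 : Mnorm M₀ (ℓ₀ u - x₀) = ‖u - w₀‖ := by
      rw [hMnorm₀, h1, h2, norm_equiv_symm]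
    show Mnorm M₀ (ℓ₀ u - x₀) ≤ δ₀
    rw [h3]
    exact Metric.mem_closedBall.mp hu
  have hws : w ∈ s := by
    have h1 : w - w₀ = eqE.symm (C₀ *ᵥ (x - x₀)) := by
      rw [Matrix.mulVec_sub, map_sub]
    have : ‖w - w₀‖ = Mnorm M₀ (x - x₀) := by
      rw [h1, norm_equiv_symm, hMnorm₀]
    rw [hs, Metric.mem_closedBall, dist_eq_norm, this]
    exact hx
  have hw₀s : w₀ ∈ s := Metric.mem_closedBall_self hδ₀.le
  -- derivative
  have hdiff : ∀ u, HasFDerivAt g (ℓ₁.comp ((fderiv ℝ (f t) (ℓ₀ u)).comp ℓ₀)) u := by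
    intro u
    have h1 : HasFDerivAt (f t) (fderiv ℝ (f t) (ℓ₀ u)) (ℓ₀ u) :=
      (hft.differentiable one_ne_zero (ℓ₀ u)).hasFDerivAt
    exact ℓ₁.hasFDerivAt.comp u (h1.comp u ℓ₀.hasFDerivAt)
  have hbound : ∀ u ∈ s, ‖fderiv ℝ g u‖ ≤ Λ := by
    intro u hu
    rw [(hdiff u).fderiv]
    refine ContinuousLinearMap.opNorm_le_bound _ hΛpos.le fun v => ?_
    have hA : jacobian (f t) (ℓ₀ u) ∈ D t := hD t hT (ℓ₀ u) (hsub u hu)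
    have hkey := key_bound hM₁sym (jacobian (f t) (ℓ₀ u)) hΛpos.le
      (hΛ t hT _ hA) (eqE v)
    have hz : fderiv ℝ (f t) (ℓ₀ u) (ℓ₀ v) =
        jacobian (f t) (ℓ₀ u) *ᵥ (C₀⁻¹ *ᵥ (eqE v)) := by
      rw [jacobian_mulVec]; rw [hℓ₀app v]
    have hnv : ‖v‖ = Real.sqrt (eqE v ⬝ᵥ eqE v) := by
      rw [← norm_equiv_symm (eqE v), eqE.symm_apply_apply]
    calc ‖(ℓ₁.comp ((fderiv ℝ (f t) (ℓ₀ u)).comp ℓ₀)) v‖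
        = Real.sqrt ((C₁ *ᵥ (fderiv ℝ (f t) (ℓ₀ u) (ℓ₀ v))) ⬝ᵥ
            (C₁ *ᵥ (fderiv ℝ (f t) (ℓ₀ u) (ℓ₀ v)))) := by
          rw [show (ℓ₁.comp ((fderiv ℝ (f t) (ℓ₀ u)).comp ℓ₀)) v =
              eqE.symm (C₁ *ᵥ (fderiv ℝ (f t) (ℓ₀ u) (ℓ₀ v))) from rfl, norm_equiv_symm]
      _ = Real.sqrt ((fderiv ℝ (f t) (ℓ₀ u) (ℓ₀ v)) ⬝ᵥ
            (M₁ *ᵥ (fderiv ℝ (f t) (ℓ₀ u) (ℓ₀ v)))) := by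
          rw [mulVec_dotProduct_eq, mulVec_mulVec, hCM₁]
      _ ≤ Real.sqrt (Λ ^ 2 * (eqE v ⬝ᵥ eqE v)) := by
          apply Real.sqrt_le_sqrt
          rw [hz]
          exact hkey
      _ = Λ * ‖v‖ := by
          rw [Real.sqrt_mul (sq_nonneg Λ), Real.sqrt_sq hΛpos.le, hnv]
  have hgd : ∀ u ∈ s, DifferentiableAt ℝ g u := fun u _ => (hdiff u).differentiableAt
  have hmain := (convex_closedBall w₀ δ₀).norm_image_sub_le_of_norm_fderiv_le hgd hbound hw₀s hws
  -- conclusion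
  have hℓ₀w : ℓ₀ w = x := by
    rw [hℓ₀app, hw, eqE.apply_symm_apply, Matrix.mulVec_mulVec, hinv, Matrix.one_mulVec]
  have hℓ₀w₀ : ℓ₀ w₀ = x₀ := by
    rw [hℓ₀app, hw₀, eqE.apply_symm_apply, Matrix.mulVec_mulVec, hinv, Matrix.one_mulVec]
  have hgw : g w - g w₀ = eqE.symm (C₁ *ᵥ (f t x - f t x₀)) := by
    rw [hg]; simp only [hℓ₀w, hℓ₀w₀, hℓ₁app]
    rw [Matrix.mulVec_sub, map_sub]
  have hnorm : ‖g w - g w₀‖ = Mnorm M₁ (f t x - f t x₀) := by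
    rw [hgw, norm_equiv_symm, hMnorm₁]
  show Mnorm M₁ (f t x - f t x₀) ≤ Λ * δ₀
  calc Mnorm M₁ (f t x - f t x₀) = ‖g w - g w₀‖ := hnorm.symm
    _ ≤ Λ * ‖w - w₀‖ := hmain
    _ ≤ Λ * δ₀ := by
        apply mul_le_mul_of_nonneg_left _ hΛpos.le
        simpa [hs, dist_eq_norm] using hws
end
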